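/- Let X X^T be invertible, Q = Y X^T (X X^T)^{-1/2} with reduced SVD Q = ∑_{i=1}^q σ_i u_i v_i^T (σ_1 ≥ ⋯ ≥ σ_q > 0). Then every matrix of the form W = ∑_{j∈J} σ_j u_j v_j^T (X X^T)^{-1/2}, where J ⊆ {1,...,q} with |J| = k, is a critical point of L^1(W) = (1/2)‖Y - W X‖_F^2 restricted to the manifold M_k of rank-k matrices, meaning the directional derivative of L^1 at W vanishes in every tangent direction Z ∈ T_W M_k = {W A + B W}. -/

import Mathlib

open Matrix

/-- The principal real power of a positive semidefinite (here: Hermitian) real matrix,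
defined through its spectral decomposition: A^r = U diag(λᵢ^r) Uᵀ. -/
noncomputable def psdRpow {n : ℕ} {A : Matrix (Fin n) (Fin n) ℝ} (hA : A.IsHermitian) (r : ℝ) :
    Matrix (Fin n) (Fin n) ℝ :=
  (hA.eigenvectorUnitary : Matrix (Fin n) (Fin n) ℝ) *
    Matrix.diagonal (fun i => (hA.eigenvalues i) ^ r) *
    (star (hA.eigenvectorUnitary : Matrix (Fin n) (Fin n) ℝ))

/-- The loss L¹(W) = (1/2)‖Y - W X‖_F² written via the trace. -/
noncomputable def L1 {dx dy m : ℕ} (X : Matrix (Fin dx) (Fin m) ℝ)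
    (Y : Matrix (Fin dy) (Fin m) ℝ) (W : Matrix (Fin dy) (Fin dx) ℝ) : ℝ :=
  (1 / 2) * Matrix.trace ((Y - W * X) * (Y - W * X)ᵀ)

lemma conj_mul_conj {n : ℕ} (U D1 D2 D3 : Matrix (Fin n) (Fin n) ℝ) (hU : star U * U = 1)
    (hD : D1 * D2 = D3) : U * D1 * star U * (U * D2 * star U) = U * D3 * star U := by
  rw [Matrix.mul_assoc (U * D1) (star U) (U * D2 * star U),
    ← Matrix.mul_assoc (star U) (U * D2) (star U), ← Matrix.mul_assoc (star U) U D2, hU,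
    Matrix.one_mul, Matrix.mul_assoc U D1 (D2 * star U), ← Matrix.mul_assoc D1 D2 (star U), hD,
    ← Matrix.mul_assoc U D3 (star U)]

lemma psdRpow_mul_psdRpow {n : ℕ} {A : Matrix (Fin n) (Fin n) ℝ} (hA : A.IsHermitian)
    (hpos : ∀ i, 0 < hA.eigenvalues i) (r s : ℝ) :
    psdRpow hA r * psdRpow hA s = psdRpow hA (r + s) := by
  unfold psdRpow
  refine conj_mul_conj _ _ _ _ (Matrix.mem_unitaryGroup_iff'.mp hA.eigenvectorUnitary.2) ?_
  rw [Matrix.diagonal_mul_diagonal]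
  have h : (fun i => hA.eigenvalues i ^ r * hA.eigenvalues i ^ s) =
      fun i => hA.eigenvalues i ^ (r + s) :=
    funext fun i => (Real.rpow_add (hpos i) r s).symm
  rw [h]

lemma psdRpow_zero {n : ℕ} {A : Matrix (Fin n) (Fin n) ℝ} (hA : A.IsHermitian) :
    psdRpow hA 0 = 1 := by
  unfold psdRpow
  simp [Real.rpow_zero, Matrix.mem_unitaryGroup_iff.mp hA.eigenvectorUnitary.2]

lemma psdRpow_one {n : ℕ} {A : Matrix (Fin n) (Fin n) ℝ} (hA : A.IsHermitian) :
    psdRpow hA 1 = A := by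
  unfold psdRpow
  simp only [Real.rpow_one]
  convert hA.spectral_theorem.symm using 3
  simp [Unitary.conjStarAlgAut_apply, Function.comp_def]

lemma psdRpow_transpose {n : ℕ} {A : Matrix (Fin n) (Fin n) ℝ} (hA : A.IsHermitian) (r : ℝ) :
    (psdRpow hA r)ᵀ = psdRpow hA r := by
  have h : (psdRpow hA r).IsHermitian := by
    unfold psdRpow
    apply Matrix.isHermitian_mul_mul_conjTranspose
    exact Matrix.isHermitian_diagonal _
  simpa [Matrix.IsHermitian, Matrix.conjTranspose_eq_transpose_of_trivial] using h

lemma vecMulVec_mul_vecMulVec {da db dc : ℕ} (a : Fin da → ℝ) (b c : Fin db → ℝ)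
    (d : Fin dc → ℝ) :
    Matrix.vecMulVec a b * Matrix.vecMulVec c d = (b ⬝ᵥ c) • Matrix.vecMulVec a d := by
  ext i j
  simp only [Matrix.mul_apply, Matrix.vecMulVec_apply, Matrix.smul_apply, smul_eq_mul,
    dotProduct]
  rw [Finset.sum_mul]
  exact Finset.sum_congr rfl fun k _ => by ring

lemma sum_svd_mul {q da db dc : ℕ} (σ : Fin q → ℝ) (a : Fin q → Fin da → ℝ)
    (b c : Fin q → Fin db → ℝ) (d : Fin q → Fin dc → ℝ)
    (hbc : ∀ i j, b i ⬝ᵥ c j = if i = j then (1 : ℝ) else 0)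
    (S T : Finset (Fin q)) :
    (∑ i ∈ S, σ i • Matrix.vecMulVec (a i) (b i)) *
      (∑ j ∈ T, σ j • Matrix.vecMulVec (c j) (d j)) =
    ∑ i ∈ S ∩ T, (σ i * σ i) • Matrix.vecMulVec (a i) (d i) := by
  rw [Matrix.sum_mul]
  simp only [Matrix.mul_sum]
  have h : ∀ i ∈ S, ∀ j ∈ T,
      (σ i • Matrix.vecMulVec (a i) (b i)) * (σ j • Matrix.vecMulVec (c j) (d j)) =
      if j = i then (σ i * σ i) • Matrix.vecMulVec (a i) (d i) else 0 := by
    intro i _ j _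
    rw [Matrix.smul_mul, Matrix.mul_smul, vecMulVec_mul_vecMulVec, hbc i j]
    by_cases hij : i = j
    · subst hij; simp [smul_smul]
    · simp [hij, Ne.symm hij]
  calc ∑ i ∈ S, ∑ j ∈ T, (σ i • Matrix.vecMulVec (a i) (b i)) *
          (σ j • Matrix.vecMulVec (c j) (d j))
      = ∑ i ∈ S, ∑ j ∈ T,
          (if j = i then (σ i * σ i) • Matrix.vecMulVec (a i) (d i) else 0) :=
        Finset.sum_congr rfl fun i hi => Finset.sum_congr rfl fun j hj => h i hi j hj
    _ = ∑ i ∈ S, (if i ∈ T then (σ i * σ i) • Matrix.vecMulVec (a i) (d i) else 0) := by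
        refine Finset.sum_congr rfl fun i _ => ?_
        rw [Finset.sum_ite_eq' T i (fun _ => (σ i * σ i) • Matrix.vecMulVec (a i) (d i))]
    _ = ∑ i ∈ S ∩ T, (σ i * σ i) • Matrix.vecMulVec (a i) (d i) := by
        rw [Finset.sum_ite_mem]

/-- Every W = ∑_{j∈J} σ_j u_j v_jᵀ (X Xᵀ)^{-1/2}, where Q = Y Xᵀ (X Xᵀ)^{-1/2} has reduced
SVD ∑ σ_i u_i v_iᵀ and |J| = k, is a critical point of L¹ restricted to the manifold of
rank-k matrices: the directional derivative of L¹ vanishes in every tangent direction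
Z = W A + B W. -/
theorem stmt12 {dx dy m q k : ℕ}
    (X : Matrix (Fin dx) (Fin m) ℝ) (Y : Matrix (Fin dy) (Fin m) ℝ)
    (hX : (X * Xᵀ).PosDef)
    (σ : Fin q → ℝ) (u : Fin q → Fin dy → ℝ) (v : Fin q → Fin dx → ℝ)
    (hσpos : ∀ i, 0 < σ i) (hσmono : Antitone σ)
    (hu : ∀ i j, u i ⬝ᵥ u j = if i = j then (1 : ℝ) else 0)
    (hv : ∀ i j, v i ⬝ᵥ v j = if i = j then (1 : ℝ) else 0)
    (hQ : Y * Xᵀ * psdRpow hX.1 (-(1 / 2)) =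
      ∑ i : Fin q, σ i • Matrix.vecMulVec (u i) (v i))
    (J : Finset (Fin q)) (hJ : J.card = k)
    (W : Matrix (Fin dy) (Fin dx) ℝ)
    (hW : W = (∑ j ∈ J, σ j • Matrix.vecMulVec (u j) (v j)) * psdRpow hX.1 (-(1 / 2))) :
    ∀ (A : Matrix (Fin dx) (Fin dx) ℝ) (B : Matrix (Fin dy) (Fin dy) ℝ),
      HasDerivAt (fun t : ℝ => L1 X Y (W + t • (W * A + B * W))) 0 0 := by
  intro A B
  set S : Matrix (Fin dx) (Fin dx) ℝ := psdRpow hX.1 (-(1 / 2)) with hSdef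
  set R : Matrix (Fin dx) (Fin dx) ℝ := psdRpow hX.1 (1 / 2) with hRdef
  set P : Matrix (Fin dy) (Fin dx) ℝ := ∑ j ∈ J, σ j • Matrix.vecMulVec (u j) (v j) with hPdef
  set Qm : Matrix (Fin dy) (Fin dx) ℝ := ∑ i : Fin q, σ i • Matrix.vecMulVec (u i) (v i)
    with hQmdef
  have hpos : ∀ i, 0 < hX.1.eigenvalues i := hX.eigenvalues_pos
  have hRS : R * S = 1 := by
    rw [hRdef, hSdef, psdRpow_mul_psdRpow hX.1 hpos]
    norm_num [psdRpow_zero]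
  have hSR : S * R = 1 := by
    rw [hRdef, hSdef, psdRpow_mul_psdRpow hX.1 hpos]
    norm_num [psdRpow_zero]
  have hSXX : S * (X * Xᵀ) = R := by
    have h1 : S * psdRpow hX.1 1 = R := by
      rw [hSdef, hRdef, psdRpow_mul_psdRpow hX.1 hpos]
      norm_num
    rwa [psdRpow_one] at h1
  have hST : Sᵀ = S := psdRpow_transpose hX.1 _
  have hYX : Y * Xᵀ = Qm * R := by
    calc Y * Xᵀ = Y * Xᵀ * (S * R) := by rw [hSR, Matrix.mul_one]
      _ = Y * Xᵀ * S * R := by simp only [Matrix.mul_assoc]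
      _ = Qm * R := by rw [hQ]
  set E : Matrix (Fin dy) (Fin m) ℝ := Y - W * X with hEdef
  have hEX : E * Xᵀ = (Qm - P) * R := by
    rw [hEdef, Matrix.sub_mul, hYX, hW, Matrix.mul_assoc (P * S) X Xᵀ,
      Matrix.mul_assoc P S (X * Xᵀ), hSXX, Matrix.sub_mul]
  have hPT : Pᵀ = ∑ j ∈ J, σ j • Matrix.vecMulVec (v j) (u j) := by
    rw [hPdef, Matrix.transpose_sum]
    refine Finset.sum_congr rfl fun j _ => ?_
    rw [Matrix.transpose_smul]
    congr 1
    ext i l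
    simp [Matrix.vecMulVec_apply, mul_comm]
  have hQP : Qm * Pᵀ = P * Pᵀ := by
    rw [hPT, hQmdef, hPdef, sum_svd_mul σ u v v u hv Finset.univ J,
      sum_svd_mul σ u v v u hv J J, Finset.univ_inter, Finset.inter_self]
  have hPQ : Pᵀ * Qm = Pᵀ * P := by
    rw [hPT, hQmdef, hPdef, sum_svd_mul σ v u u v hu J Finset.univ,
      sum_svd_mul σ v u u v hu J J, Finset.inter_univ, Finset.inter_self]
  have hWT : Wᵀ = S * Pᵀ := by
    rw [hW, Matrix.transpose_mul, hST]
  have hEW : E * Xᵀ * Wᵀ = 0 := by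
    rw [hEX, hWT, ← Matrix.mul_assoc ((Qm - P) * R) S Pᵀ, Matrix.mul_assoc (Qm - P) R S, hRS,
      Matrix.mul_one, Matrix.sub_mul, hQP, sub_self]
  have hWE : Wᵀ * (E * Xᵀ) = 0 := by
    rw [hEX, hWT, Matrix.mul_assoc S Pᵀ ((Qm - P) * R), ← Matrix.mul_assoc Pᵀ (Qm - P) R,
      Matrix.mul_sub Pᵀ Qm P, hPQ, sub_self, Matrix.zero_mul, Matrix.mul_zero]
  set Z : Matrix (Fin dy) (Fin dx) ℝ := W * A + B * W with hZdef
  have hc1 : Matrix.trace (E * Xᵀ * Zᵀ) = 0 := by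
    rw [hZdef, Matrix.transpose_add, Matrix.mul_add, Matrix.trace_add,
      Matrix.transpose_mul, Matrix.transpose_mul]
    have h1 : E * Xᵀ * (Aᵀ * Wᵀ) = E * Xᵀ * Aᵀ * Wᵀ := by simp only [Matrix.mul_assoc]
    have h2 : Matrix.trace (E * Xᵀ * Aᵀ * Wᵀ) = Matrix.trace (Wᵀ * (E * Xᵀ * Aᵀ)) :=
      Matrix.trace_mul_comm _ _
    have h3 : Wᵀ * (E * Xᵀ * Aᵀ) = Wᵀ * (E * Xᵀ) * Aᵀ := by
      simp only [Matrix.mul_assoc]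
    have h4 : E * Xᵀ * (Wᵀ * Bᵀ) = E * Xᵀ * Wᵀ * Bᵀ := by simp only [Matrix.mul_assoc]
    rw [h1, h2, h3, hWE, h4, hEW]
    simp
  have hL1W : L1 X Y W = (1 / 2) * Matrix.trace (E * Eᵀ) := by
    rw [L1, hEdef]
  have hfun : (fun t : ℝ => L1 X Y (W + t • Z)) =
      fun t : ℝ => L1 X Y W + ((1 / 2) * Matrix.trace (Z * X * (Z * X)ᵀ)) * t ^ 2 := by
    funext t
    have hexp : Y - (W + t • Z) * X = E - t • (Z * X) := by
      rw [hEdef, Matrix.add_mul, Matrix.smul_mul]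
      abel
    have hsq : (E - t • (Z * X)) * (E - t • (Z * X))ᵀ =
        E * Eᵀ - t • (Z * X * Eᵀ) - t • (E * (Z * X)ᵀ) + (t * t) • (Z * X * (Z * X)ᵀ) := by
      rw [Matrix.transpose_sub, Matrix.transpose_smul, Matrix.sub_mul, Matrix.mul_sub,
        Matrix.mul_sub, Matrix.smul_mul, Matrix.mul_smul, Matrix.mul_smul, Matrix.smul_mul,
        smul_smul]
      abel
    have htr1 : Matrix.trace (Z * X * Eᵀ) = 0 := by
      have h := (Matrix.trace_transpose (Z * X * Eᵀ)).symm
      rw [Matrix.transpose_mul, Matrix.transpose_mul, Matrix.transpose_transpose,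
        ← Matrix.mul_assoc] at h
      rw [h, hc1]
    have htr2 : Matrix.trace (E * (Z * X)ᵀ) = 0 := by
      rw [Matrix.transpose_mul, ← Matrix.mul_assoc]
      exact hc1
    simp only [L1]
    rw [hexp, hsq, Matrix.trace_add, Matrix.trace_sub, Matrix.trace_sub, Matrix.trace_smul,
      Matrix.trace_smul, Matrix.trace_smul, htr1, htr2, ← hEdef]
    simp only [smul_eq_mul]
    ring
  rw [hfun]
  have h : HasDerivAt (fun t : ℝ =>
      L1 X Y W + ((1 / 2) * Matrix.trace (Z * X * (Z * X)ᵀ)) * t ^ 2)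
      (((1 / 2) * Matrix.trace (Z * X * (Z * X)ᵀ)) * (2 * (0:ℝ) ^ 1)) 0 :=
    ((hasDerivAt_pow 2 (0:ℝ)).const_mul _).const_add _
  simpa using h
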